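/- arXiv:2108.12766 — 4 statements merged into one kernel-verified Lean document; each statement's English description precedes it below -/
import Mathlib

section
/- Let n be a positive integer and let λ be a partition with at most 2n parts whose Young diagram can be tiled by dominoes, padded with zeros so that λ_1, …, λ_{2n} are defined. Then b(λ) = Σ_{1≤i≤2n, λ_i−i even} (λ_i − i) + Σ_{1≤i<j≤2n} (−1)^{λ_i − λ_j + j − i}(λ_j − j). -/
/-- A partition `λ`, 1-indexed: `λ_i = part i` for `i ≥ 1`. -/
structure OneIdxPartition where
  part : ℕ → ℕ
  part_zero : part 0 = 0
  antitone : ∀ ⦃i j : ℕ⦄, 1 ≤ i → i ≤ j → part j ≤ part i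
  finite : ∃ N : ℕ, ∀ i : ℕ, N ≤ i → part i = 0

/-- The conjugate partition: `λ'_j = #{i ≥ 1 : λ_i ≥ j}`. -/
noncomputable def conjFn (f : ℕ → ℕ) (j : ℕ) : ℕ :=
  Set.ncard {i : ℕ | 1 ≤ i ∧ j ≤ f i}

/-- The cells of the Young diagram of `λ`. -/
def cellsFn (f : ℕ → ℕ) : Set (ℕ × ℕ) :=
  {p : ℕ × ℕ | 1 ≤ p.1 ∧ 1 ≤ p.2 ∧ p.2 ≤ f p.1}

/-- The hook length of the cell `(i,j)`: `h(i,j) = (λ_i − j) + (λ'_j − i) + 1`. -/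
noncomputable def hookFn (f : ℕ → ℕ) (i j : ℕ) : ℕ :=
  (f i - j) + (conjFn f j - i) + 1

/-- `b(λ) = Σ_{(i,j)∈λ} (−1)^{λ_i + λ'_j − i − j + 1}(λ_i − i)`;
the exponent is replaced by `λ_i + λ'_j + i + j + 1`, which has the same parity. -/
noncomputable def bFn (f : ℕ → ℕ) : ℤ :=
  ∑ᶠ i : ℕ, ∑ j ∈ Finset.Icc 1 (f i),
    (-1 : ℤ) ^ (f i + conjFn f j + i + j + 1) * ((f i : ℤ) - (i : ℤ))

/-- The size `|λ| = Σ_i λ_i`. -/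
noncomputable def sizeFn (f : ℕ → ℕ) : ℕ := ∑ᶠ i : ℕ, f i

/-- A domino: a pair of horizontally or vertically adjacent cells. -/
def IsDomino (d : Set (ℕ × ℕ)) : Prop :=
  ∃ i j : ℕ, d = {(i, j), (i, j + 1)} ∨ d = {(i, j), (i + 1, j)}

/-- The Young diagram of `λ` can be tiled by dominoes. -/
def HasDominoTiling (f : ℕ → ℕ) : Prop :=
  ∃ D : Set (Set (ℕ × ℕ)), (∀ d ∈ D, IsDomino d) ∧
    D.PairwiseDisjoint id ∧ ⋃₀ D = cellsFn f

open Finset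

/-- `2 · Σ_{a < j ≤ b} (−1)^j = (−1)^b − (−1)^a`. -/
lemma two_mul_sum_pow {a b : ℕ} (h : a ≤ b) :
    2 * ∑ j ∈ Finset.Ioc a b, (-1 : ℤ) ^ j = (-1 : ℤ) ^ b - (-1 : ℤ) ^ a := by
  induction b, h using Nat.le_induction with
  | base => simp
  | succ b hb ih =>
      rw [Finset.sum_Ioc_succ_top hb, mul_add, ih, pow_succ]
      ring

/-- Value of the conjugate partition on the `k`-th block. -/
lemma conj_eq_block (f : ℕ → ℕ) (hanti : ∀ ⦃i j : ℕ⦄, 1 ≤ i → i ≤ j → f j ≤ f i)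
    {k j : ℕ} (hk : 1 ≤ k) (hj1 : f (k + 1) < j) (hj2 : j ≤ f k) :
    conjFn f j = k := by
  have hset : {i : ℕ | 1 ≤ i ∧ j ≤ f i} = ↑(Finset.Icc 1 k) := by
    ext i
    simp only [Set.mem_setOf_eq, Finset.coe_Icc, Set.mem_Icc]
    constructor
    · rintro ⟨h1, h2⟩
      refine ⟨h1, ?_⟩
      by_contra hik
      push_neg at hik
      have : f i ≤ f (k + 1) := hanti (by omega) (by omega)
      omega
    · rintro ⟨h1, h2⟩
      exact ⟨h1, le_trans hj2 (hanti h1 h2)⟩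
  rw [conjFn, hset, Set.ncard_coe_finset, Nat.card_Icc]
  omega

/-- Key row computation: twice the alternating sum over a row. -/
lemma keyU (f : ℕ → ℕ) (hanti : ∀ ⦃i j : ℕ⦄, 1 ≤ i → i ≤ j → f j ≤ f i)
    (n : ℕ) (hzero : ∀ i, 2 * n + 1 ≤ i → f i = 0) :
    ∀ t i, 1 ≤ i → i + t = 2 * n + 1 →
      2 * ∑ j ∈ Finset.Ioc 0 (f i), (-1 : ℤ) ^ (conjFn f j + j)
        = ∑ k ∈ Finset.Icc i (2 * n),
            ((-1 : ℤ) ^ (f k + k) + (-1 : ℤ) ^ (f (k + 1) + (k + 1))) := by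
  intro t
  induction t with
  | zero =>
      intro i h1 h2
      have hi : i = 2 * n + 1 := by omega
      subst hi
      rw [hzero _ le_rfl, Finset.Icc_eq_empty (by omega)]
      simp
  | succ t ih =>
      intro i h1 h2
      have hi2 : i ≤ 2 * n := by omega
      have hstep : f (i + 1) ≤ f i := hanti h1 (Nat.le_succ i)
      have hsplit :
          ∑ j ∈ Finset.Ioc 0 (f i), (-1 : ℤ) ^ (conjFn f j + j)
            = ∑ j ∈ Finset.Ioc 0 (f (i + 1)), (-1 : ℤ) ^ (conjFn f j + j)
              + ∑ j ∈ Finset.Ioc (f (i + 1)) (f i), (-1 : ℤ) ^ (conjFn f j + j) :=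
        (Finset.sum_Ioc_consecutive _ (Nat.zero_le _) hstep).symm
  
      have hblock :
          ∑ j ∈ Finset.Ioc (f (i + 1)) (f i), (-1 : ℤ) ^ (conjFn f j + j)
            = (-1 : ℤ) ^ i * ∑ j ∈ Finset.Ioc (f (i + 1)) (f i), (-1 : ℤ) ^ j := by
        rw [Finset.mul_sum]
        refine Finset.sum_congr rfl fun j hj => ?_
        rw [Finset.mem_Ioc] at hj
        rw [conj_eq_block f hanti h1 hj.1 hj.2, pow_add]
      have h2block :
          2 * ∑ j ∈ Finset.Ioc (f (i + 1)) (f i), (-1 : ℤ) ^ (conjFn f j + j)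
            = (-1 : ℤ) ^ (f i + i) + (-1 : ℤ) ^ (f (i + 1) + (i + 1)) := by
        rw [hblock, show (2 : ℤ) * ((-1 : ℤ) ^ i * ∑ j ∈ Finset.Ioc (f (i + 1)) (f i),
          (-1 : ℤ) ^ j) = (-1 : ℤ) ^ i * (2 * ∑ j ∈ Finset.Ioc (f (i + 1)) (f i),
          (-1 : ℤ) ^ j) by ring, two_mul_sum_pow hstep, pow_add, pow_add, pow_add,
          pow_succ]
        ring
      rw [hsplit, mul_add, h2block, ih (i + 1) (by omega) (by omega),
        Finset.Icc_eq_cons_Ioc hi2, Finset.sum_cons,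
        show Finset.Ioc i (2 * n) = Finset.Icc (i + 1) (2 * n) from
          (Finset.Icc_add_one_left_eq_Ioc (a := i) (b := 2 * n)).symm]
      ring

/-- Conversion of the telescoped sum into closed form. -/
lemma keyV (f : ℕ → ℕ) (n : ℕ) (hzero : ∀ i, 2 * n + 1 ≤ i → f i = 0) :
    ∀ t i, 1 ≤ i → i + t = 2 * n →
      ∑ k ∈ Finset.Icc i (2 * n),
          ((-1 : ℤ) ^ (f k + k) + (-1 : ℤ) ^ (f (k + 1) + (k + 1)))
        = (-1 : ℤ) ^ (f i + i) - 1
          + 2 * ∑ k ∈ Finset.Ioc i (2 * n), (-1 : ℤ) ^ (f k + k) := by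
  intro t
  induction t with
  | zero =>
      intro i h1 h2
      have hi : i = 2 * n := by omega
      subst hi
      rw [Finset.Icc_self, Finset.sum_singleton, Finset.Ioc_self, Finset.sum_empty,
        hzero (2 * n + 1) le_rfl]
      have : Odd (0 + (2 * n + 1)) := ⟨n, by ring⟩
      rw [this.neg_one_pow]
      ring
  | succ t ih =>
      intro i h1 h2
      have hi2 : i < 2 * n := by omega
      rw [Finset.Icc_eq_cons_Ioc (show i ≤ 2 * n by omega), Finset.sum_cons,
        show Finset.Ioc i (2 * n) = Finset.Icc (i + 1) (2 * n) from
          (Finset.Icc_add_one_left_eq_Ioc (a := i) (b := 2 * n)).symm,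
        ih (i + 1) (by omega) (by omega),
        Finset.Icc_eq_cons_Ioc (show i + 1 ≤ 2 * n by omega), Finset.sum_cons]
      ring

/-- Checkerboard argument: a domino tiling forces the alternating sum of signs to vanish. -/
lemma core_balance (f : ℕ → ℕ) (_hf0 : f 0 = 0)
    (hanti : ∀ ⦃i j : ℕ⦄, 1 ≤ i → i ≤ j → f j ≤ f i)
    (n : ℕ) (hzero : ∀ i, 2 * n + 1 ≤ i → f i = 0)
    (ht : HasDominoTiling f) :
    ∑ i ∈ Finset.Icc 1 (2 * n), (-1 : ℤ) ^ (f i + i) = 0 := by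
  classical
  obtain ⟨D, hD, hdisj, hun⟩ := ht
  set w : ℕ × ℕ → ℤ := fun p => (-1 : ℤ) ^ (p.1 + p.2) with hw
  -- cells are finite
  have hsub : cellsFn f ⊆ ↑(Finset.Icc 1 (2 * n) ×ˢ Finset.Icc 1 (f 1)) := by
    rintro ⟨i, j⟩ ⟨h1, h2, h3⟩
    simp only at h1 h2 h3
    simp only [Finset.coe_product, Set.mem_prod, Finset.mem_coe, Finset.mem_Icc]
    have hi2 : i ≤ 2 * n := by
      by_contra hc
      push_neg at hc
      have := hzero i (by omega)
      omega
    exact ⟨⟨h1, hi2⟩, h2, le_trans h3 (hanti le_rfl h1)⟩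
  have hcfin : (cellsFn f).Finite :=
    Set.Finite.subset (Finset.finite_toSet _) hsub
  have hDfin : D.Finite := by
    refine Set.Finite.subset hcfin.finite_subsets fun d hd => ?_
    exact fun p hp => hun ▸ Set.mem_sUnion.2 ⟨d, hd, hp⟩
  have hdfin : ∀ d ∈ D, (d : Set (ℕ × ℕ)).Finite := by
    intro d hd
    refine Set.Finite.subset hcfin fun p hp => ?_
    exact hun ▸ Set.mem_sUnion.2 ⟨d, hd, hp⟩
  -- the total weight is zero
  have hzero_tot : ∑ᶠ p ∈ cellsFn f, w p = 0 := by
    rw [← hun, finsum_mem_sUnion hdisj hDfin hdfin]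
    have : ∀ d ∈ D, ∑ᶠ p ∈ d, w p = 0 := by
      intro d hd
      obtain ⟨i, j, hor | hver⟩ := hD d hd
      · rw [hor, finsum_mem_pair (by simp)]
        simp only [hw]
        rw [show i + (j + 1) = (i + j) + 1 by ring, pow_succ]
        ring
      · rw [hver, finsum_mem_pair (by simp)]
        simp only [hw]
        rw [show i + 1 + j = (i + j) + 1 by ring, pow_succ]
        ring
    calc ∑ᶠ d ∈ D, ∑ᶠ p ∈ d, w p = ∑ᶠ d ∈ D, (0 : ℤ) :=
          finsum_mem_congr rfl this
      _ = 0 := by simp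
  -- rewrite the cells as a finset bi-union of rows
  have hcells_eq : cellsFn f
      = ↑((Finset.Icc 1 (2 * n)).biUnion
          (fun i => (Finset.Icc 1 (f i)).image fun j => (i, j))) := by
    ext ⟨i, j⟩
    simp only [cellsFn, Set.mem_setOf_eq, Finset.coe_biUnion, Set.mem_iUnion,
      Finset.mem_coe, Finset.mem_Icc, Finset.mem_image, Prod.mk.injEq]
    constructor
    · rintro ⟨h1, h2, h3⟩
      have hi2 : i ≤ 2 * n := by
        by_contra hc
        push_neg at hc
        have := hzero i (by omega)
        omega
      exact ⟨i, ⟨h1, hi2⟩, j, ⟨h2, h3⟩, rfl, rfl⟩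
    · rintro ⟨i', ⟨h1, h2⟩, j', ⟨h3, h4⟩, rfl, rfl⟩
      exact ⟨h1, h3, h4⟩
  have hrows : ∑ᶠ p ∈ cellsFn f, w p
      = ∑ i ∈ Finset.Icc 1 (2 * n), ∑ j ∈ Finset.Icc 1 (f i), (-1 : ℤ) ^ (i + j) := by
    rw [hcells_eq, finsum_mem_coe_finset, Finset.sum_biUnion]
    · refine Finset.sum_congr rfl fun i _ => ?_
      rw [Finset.sum_image (by intro a _ b _ h; simpa using h)]
    · intro x _ y _ hxy
      simp only [Function.onFun]
      rw [Finset.disjoint_left]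
      rintro ⟨a, b⟩ ha hb
      simp only [Finset.mem_image, Prod.mk.injEq] at ha hb
      obtain ⟨j₁, _, rfl, _⟩ := ha
      obtain ⟨j₂, _, h₂, _⟩ := hb
      exact hxy h₂.symm
  -- per-row evaluation
  have hrow : ∀ i, 2 * ∑ j ∈ Finset.Icc 1 (f i), (-1 : ℤ) ^ (i + j)
      = (-1 : ℤ) ^ (f i + i) - (-1 : ℤ) ^ i := by
    intro i
    have : ∑ j ∈ Finset.Icc 1 (f i), (-1 : ℤ) ^ (i + j)
        = (-1 : ℤ) ^ i * ∑ j ∈ Finset.Ioc 0 (f i), (-1 : ℤ) ^ j := by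
      rw [Finset.mul_sum,
        show Finset.Icc 1 (f i) = Finset.Ioc 0 (f i) from
          Finset.Icc_add_one_left_eq_Ioc (a := 0) (b := f i)]
      exact Finset.sum_congr rfl fun j _ => by rw [pow_add]
    rw [this, show (2 : ℤ) * ((-1 : ℤ) ^ i * ∑ j ∈ Finset.Ioc 0 (f i), (-1 : ℤ) ^ j)
        = (-1 : ℤ) ^ i * (2 * ∑ j ∈ Finset.Ioc 0 (f i), (-1 : ℤ) ^ j) by ring,
      two_mul_sum_pow (Nat.zero_le (f i)), pow_add]
    ring
  -- the alternating sum (-1)^i over 1..2n is zero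
  have halt : ∑ i ∈ Finset.Icc 1 (2 * n), (-1 : ℤ) ^ i = 0 := by
    have h2 : 2 * ∑ i ∈ Finset.Ioc 0 (2 * n), (-1 : ℤ) ^ i
        = (-1 : ℤ) ^ (2 * n) - (-1 : ℤ) ^ 0 := two_mul_sum_pow (Nat.zero_le _)
    rw [pow_mul, neg_one_sq, one_pow, pow_zero, sub_self] at h2
    have := mul_left_cancel₀ (two_ne_zero (α := ℤ)) (by rw [h2, mul_zero] :
      2 * ∑ i ∈ Finset.Ioc 0 (2 * n), (-1 : ℤ) ^ i = 2 * 0)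
    rw [show Finset.Icc 1 (2 * n) = Finset.Ioc 0 (2 * n) from
      Finset.Icc_add_one_left_eq_Ioc (a := 0) (b := 2 * n)]
    exact this
  -- combine
  have key : 2 * ∑ i ∈ Finset.Icc 1 (2 * n), ∑ j ∈ Finset.Icc 1 (f i), (-1 : ℤ) ^ (i + j)
      = ∑ i ∈ Finset.Icc 1 (2 * n), (-1 : ℤ) ^ (f i + i)
        - ∑ i ∈ Finset.Icc 1 (2 * n), (-1 : ℤ) ^ i := by
    rw [Finset.mul_sum, ← Finset.sum_sub_distrib]
    exact Finset.sum_congr rfl fun i _ => hrow i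
  rw [← hrows, hzero_tot, mul_zero] at key
  rw [halt, sub_zero] at key
  exact key.symm

/-- Pairing lemma. -/
lemma pair_sum (N : ℕ) (ε a : ℕ → ℤ) (hsq : ∀ i, ε i * ε i = 1)
    (H : ∑ i ∈ Finset.Icc 1 N, ε i = 0) :
    ∑ i ∈ Finset.Icc 1 N, ∑ k ∈ Finset.Ioc i N, ε i * ε k * (a i + a k)
      = -∑ i ∈ Finset.Icc 1 N, a i := by
  have h0 : ∑ i ∈ Finset.Icc 1 N, ∑ k ∈ Finset.Icc 1 N, ε i * (ε k * a k) = 0 := by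
    rw [← Finset.sum_mul_sum, H, zero_mul]
  have hIcc : ∀ m : ℕ, Finset.Icc 1 m = Finset.Ico 1 (m + 1) := fun m =>
    (Finset.Ico_add_one_right_eq_Icc (a := 1) (b := m)).symm
  have hsplit : ∀ i ∈ Finset.Icc 1 N,
      ∑ k ∈ Finset.Icc 1 N, ε i * (ε k * a k)
        = (∑ k ∈ Finset.Ico 1 i, ε i * (ε k * a k)) + a i
          + ∑ k ∈ Finset.Ico (i + 1) (N + 1), ε i * (ε k * a k) := by
    intro i hi
    rw [Finset.mem_Icc] at hi
    rw [hIcc, ← Finset.sum_Ico_consecutive _ (hi.1) (by omega : i ≤ N + 1),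
      Finset.sum_eq_sum_Ico_succ_bot (by omega : i < N + 1)]
    have : ε i * (ε i * a i) = a i := by rw [← mul_assoc, hsq, one_mul]
    rw [this]
    ring
  rw [Finset.sum_congr rfl hsplit] at h0
  rw [Finset.sum_add_distrib, Finset.sum_add_distrib] at h0
  -- swap the lower-triangular sum
  have hswap : ∑ i ∈ Finset.Icc 1 N, ∑ k ∈ Finset.Ico 1 i, ε i * (ε k * a k)
      = ∑ i ∈ Finset.Icc 1 N, ∑ k ∈ Finset.Ico (i + 1) (N + 1), ε i * (ε k * a i) := by
    rw [hIcc]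
    rw [show (∑ i ∈ Finset.Ico 1 (N + 1), ∑ k ∈ Finset.Ico (i + 1) (N + 1),
        ε i * (ε k * a i)) = ∑ k ∈ Finset.Ico 1 (N + 1), ∑ i ∈ Finset.Ico 1 k,
        ε i * (ε k * a i) from Finset.sum_Ico_Ico_comm' 1 (N + 1) _]
    refine Finset.sum_congr rfl fun i _ => Finset.sum_congr rfl fun k _ => by ring
  rw [hswap] at h0
  have hIoc : ∀ i : ℕ, Finset.Ico (i + 1) (N + 1) = Finset.Ioc i N := fun i => by
    rw [Finset.Ico_add_one_right_eq_Icc, Finset.Icc_add_one_left_eq_Ioc]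
  simp only [hIoc] at h0
  have hcomb : ∑ i ∈ Finset.Icc 1 N, ∑ k ∈ Finset.Ioc i N, ε i * ε k * (a i + a k)
      = (∑ i ∈ Finset.Icc 1 N, ∑ k ∈ Finset.Ioc i N, ε i * (ε k * a i))
        + ∑ i ∈ Finset.Icc 1 N, ∑ k ∈ Finset.Ioc i N, ε i * (ε k * a k) := by
    rw [← Finset.sum_add_distrib]
    refine Finset.sum_congr rfl fun i _ => ?_
    rw [← Finset.sum_add_distrib]
    exact Finset.sum_congr rfl fun k _ => by ring
  rw [hcomb]
  linarith [h0]

/-- for `λ` with at most `2n` parts and empty 2-core,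
`b(λ) = Σ_{1≤i≤2n, λ_i−i even} (λ_i−i) + Σ_{1≤i<j≤2n} (−1)^{λ_i−λ_j+j−i}(λ_j−j)`. -/
theorem b_eq_even_diag_sum (n : ℕ) (hn : 0 < n) (μ : OneIdxPartition)
    (hlen : μ.part (2 * n + 1) = 0) (ht : HasDominoTiling μ.part) :
    bFn μ.part =
      (∑ i ∈ Finset.Icc 1 (2 * n),
        if Even (μ.part i + i) then (μ.part i : ℤ) - (i : ℤ) else 0)
      + ∑ i ∈ Finset.Icc 1 (2 * n), ∑ j ∈ Finset.Ioc i (2 * n),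
          (-1 : ℤ) ^ (μ.part i + μ.part j + i + j) * ((μ.part j : ℤ) - (j : ℤ)) := by
  classical
  have hanti := μ.antitone
  set f := μ.part with hfdef
  have hzero : ∀ i, 2 * n + 1 ≤ i → f i = 0 := by
    intro i hi
    have h := hanti (show (1 : ℕ) ≤ 2 * n + 1 by omega) hi
    omega
  have hcore : ∑ i ∈ Finset.Icc 1 (2 * n), (-1 : ℤ) ^ (f i + i) = 0 :=
    core_balance f μ.part_zero hanti n hzero ht
  have hsq : ∀ i, (-1 : ℤ) ^ (f i + i) * (-1 : ℤ) ^ (f i + i) = 1 := by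
    intro i
    rw [← pow_add]
    exact Even.neg_one_pow ⟨f i + i, by ring⟩
  have hb : bFn f = ∑ i ∈ Finset.Icc 1 (2 * n), ∑ j ∈ Finset.Icc 1 (f i),
      (-1 : ℤ) ^ (f i + conjFn f j + i + j + 1) * ((f i : ℤ) - (i : ℤ)) := by
    apply finsum_eq_finset_sum_of_support_subset
    intro i hi
    simp only [Function.mem_support] at hi
    simp only [Finset.coe_Icc, Set.mem_Icc]
    by_contra hc
    apply hi
    have hfi : f i = 0 := by
      rcases Nat.eq_zero_or_pos i with h | h
      · rw [h]; exact μ.part_zero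
      · exact hzero i (by omega)
    rw [hfi]
    simp
  rw [hb]
  apply mul_left_cancel₀ (show (2 : ℤ) ≠ 0 by norm_num)
  have E1 : 2 * ∑ i ∈ Finset.Icc 1 (2 * n), ∑ j ∈ Finset.Icc 1 (f i),
      (-1 : ℤ) ^ (f i + conjFn f j + i + j + 1) * ((f i : ℤ) - (i : ℤ))
      = ∑ i ∈ Finset.Icc 1 (2 * n),
          (((-1 : ℤ) ^ (f i + i) - 1) * ((f i : ℤ) - (i : ℤ)))
        - 2 * ∑ i ∈ Finset.Icc 1 (2 * n), ∑ k ∈ Finset.Ioc i (2 * n),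
            (-1 : ℤ) ^ (f i + i) * (-1 : ℤ) ^ (f k + k) * ((f i : ℤ) - (i : ℤ)) := by
    rw [Finset.mul_sum, Finset.mul_sum, ← Finset.sum_sub_distrib]
    refine Finset.sum_congr rfl fun i hi => ?_
    rw [Finset.mem_Icc] at hi
    have h1 : ∑ j ∈ Finset.Icc 1 (f i),
        (-1 : ℤ) ^ (f i + conjFn f j + i + j + 1) * ((f i : ℤ) - (i : ℤ))
        = (-1 : ℤ) ^ (f i + i + 1) * ((f i : ℤ) - (i : ℤ))
          * ∑ j ∈ Finset.Ioc 0 (f i), (-1 : ℤ) ^ (conjFn f j + j) := by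
      rw [show Finset.Icc 1 (f i) = Finset.Ioc 0 (f i) from
        Finset.Icc_add_one_left_eq_Ioc (a := 0) (b := f i), Finset.mul_sum]
      refine Finset.sum_congr rfl fun j _ => ?_
      rw [show f i + conjFn f j + i + j + 1 = (f i + i + 1) + (conjFn f j + j) by ring,
        pow_add]
      ring
    rw [h1, show (2 : ℤ) * ((-1 : ℤ) ^ (f i + i + 1) * ((f i : ℤ) - (i : ℤ))
          * ∑ j ∈ Finset.Ioc 0 (f i), (-1 : ℤ) ^ (conjFn f j + j))
        = (-1 : ℤ) ^ (f i + i + 1) * ((f i : ℤ) - (i : ℤ))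
          * (2 * ∑ j ∈ Finset.Ioc 0 (f i), (-1 : ℤ) ^ (conjFn f j + j)) by ring,
      keyU f hanti n hzero (2 * n + 1 - i) i hi.1 (by omega),
      keyV f n hzero (2 * n - i) i hi.1 (by omega), pow_succ]
    have hV : ∑ k ∈ Finset.Ioc i (2 * n),
        (-1 : ℤ) ^ (f i + i) * (-1 : ℤ) ^ (f k + k) * ((f i : ℤ) - (i : ℤ))
        = (-1 : ℤ) ^ (f i + i) * ((f i : ℤ) - (i : ℤ))
          * ∑ k ∈ Finset.Ioc i (2 * n), (-1 : ℤ) ^ (f k + k) := by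
      rw [Finset.mul_sum]
      exact Finset.sum_congr rfl fun k _ => by ring
    rw [hV]
    linear_combination (-((f i : ℤ) - (i : ℤ))) * hsq i
  have E2 : 2 * ∑ i ∈ Finset.Icc 1 (2 * n),
      (if Even (f i + i) then (f i : ℤ) - (i : ℤ) else 0)
      = ∑ i ∈ Finset.Icc 1 (2 * n),
          (((-1 : ℤ) ^ (f i + i) + 1) * ((f i : ℤ) - (i : ℤ))) := by
    rw [Finset.mul_sum]
    refine Finset.sum_congr rfl fun i _ => ?_
    by_cases h : Even (f i + i)
    · rw [if_pos h, h.neg_one_pow]; ring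
    · rw [if_neg h, (Nat.not_even_iff_odd.mp h).neg_one_pow]; ring
  have E3 : ∑ i ∈ Finset.Icc 1 (2 * n), ∑ k ∈ Finset.Ioc i (2 * n),
      (-1 : ℤ) ^ (f i + f k + i + k) * ((f k : ℤ) - (k : ℤ))
      = ∑ i ∈ Finset.Icc 1 (2 * n), ∑ k ∈ Finset.Ioc i (2 * n),
          (-1 : ℤ) ^ (f i + i) * (-1 : ℤ) ^ (f k + k) * ((f k : ℤ) - (k : ℤ)) := by
    refine Finset.sum_congr rfl fun i _ => Finset.sum_congr rfl fun k _ => ?_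
    rw [show f i + f k + i + k = (f i + i) + (f k + k) by ring, pow_add]
  have E4 : ∑ i ∈ Finset.Icc 1 (2 * n), ∑ k ∈ Finset.Ioc i (2 * n),
        (-1 : ℤ) ^ (f i + i) * (-1 : ℤ) ^ (f k + k)
          * (((f i : ℤ) - (i : ℤ)) + ((f k : ℤ) - (k : ℤ)))
      = -∑ i ∈ Finset.Icc 1 (2 * n), ((f i : ℤ) - (i : ℤ)) :=
    pair_sum (2 * n) (fun i => (-1 : ℤ) ^ (f i + i))
      (fun i => (f i : ℤ) - (i : ℤ)) hsq hcore
  have E4' : (∑ i ∈ Finset.Icc 1 (2 * n), ∑ k ∈ Finset.Ioc i (2 * n),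
        (-1 : ℤ) ^ (f i + i) * (-1 : ℤ) ^ (f k + k) * ((f i : ℤ) - (i : ℤ)))
      + (∑ i ∈ Finset.Icc 1 (2 * n), ∑ k ∈ Finset.Ioc i (2 * n),
        (-1 : ℤ) ^ (f i + i) * (-1 : ℤ) ^ (f k + k) * ((f k : ℤ) - (k : ℤ)))
      = -∑ i ∈ Finset.Icc 1 (2 * n), ((f i : ℤ) - (i : ℤ)) := by
    rw [← E4, ← Finset.sum_add_distrib]
    refine Finset.sum_congr rfl fun i _ => ?_
    rw [← Finset.sum_add_distrib]
    exact Finset.sum_congr rfl fun k _ => by ring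
  have E5 : ∑ i ∈ Finset.Icc 1 (2 * n),
        (((-1 : ℤ) ^ (f i + i) - 1) * ((f i : ℤ) - (i : ℤ)))
      = ∑ i ∈ Finset.Icc 1 (2 * n),
          (((-1 : ℤ) ^ (f i + i) + 1) * ((f i : ℤ) - (i : ℤ)))
        - 2 * ∑ i ∈ Finset.Icc 1 (2 * n), ((f i : ℤ) - (i : ℤ)) := by
    rw [Finset.mul_sum, ← Finset.sum_sub_distrib]
    exact Finset.sum_congr rfl fun i _ => by ring
  rw [E1, mul_add, E2, E3]
  linarith [E4', E5]
end

section
/- Let n be a positive integer and let λ be a partition with at most 2n parts whose Young diagram can be tiled by dominoes, padded with zeros so that λ_1, …, λ_{2n} are defined. Then Σ_{i=1}^{2n} Σ_{j=1}^{2n} (−1)^{λ_i − λ_j + j − i}(λ_i − i) = 0. -/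
/-- checkerboard color -/
noncomputable def col (p : ℕ × ℕ) : ℤ := (-1) ^ (p.1 + p.2)

lemma alt_sum (m : ℕ) : ∑ j ∈ Finset.Icc 1 (2 * m), (-1 : ℤ) ^ j = 0 := by
  induction m with
  | zero => simp
  | succ m ih =>
    have h : Finset.Icc 1 (2 * (m + 1))
        = insert (2 * m + 2) (insert (2 * m + 1) (Finset.Icc 1 (2 * m))) := by
      ext x; simp [Finset.mem_Icc]; try omega
    rw [h, Finset.sum_insert (by simp [Finset.mem_Icc]; try omega),
      Finset.sum_insert (by simp [Finset.mem_Icc]; try omega), ih,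
      (by omega : 2 * m + 2 = (2 * m + 1) + 1), pow_succ]
    ring

lemma domino_col_sum {d : Set (ℕ × ℕ)} (hd : IsDomino d) : ∑ᶠ p ∈ d, col p = 0 := by
  obtain ⟨i, j, h | h⟩ := hd <;> subst h
  · rw [finsum_mem_pair (by simp)]
    show (-1 : ℤ) ^ (i + j) + (-1) ^ (i + (j + 1)) = 0
    rw [(by ring : i + (j + 1) = (i + j) + 1), pow_succ]; ring
  · rw [finsum_mem_pair (by simp)]
    show (-1 : ℤ) ^ (i + j) + (-1) ^ ((i + 1) + j) = 0
    rw [(by ring : (i + 1) + j = (i + j) + 1), pow_succ]; ring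

lemma domino_finite {d : Set (ℕ × ℕ)} (hd : IsDomino d) : d.Finite := by
  obtain ⟨i, j, h | h⟩ := hd <;> subst h <;> exact (Set.finite_singleton _).insert _

lemma cells_sum_zero {f : ℕ → ℕ} (ht : HasDominoTiling f) (hfin : (cellsFn f).Finite) :
    ∑ᶠ p ∈ cellsFn f, col p = 0 := by
  obtain ⟨D, hdom, hdisj, hun⟩ := ht
  have hDfin : D.Finite := by
    have : D ⊆ {t | t ⊆ cellsFn f} := fun d hd => by
      rw [← hun]; exact Set.subset_sUnion_of_mem hd
    exact (Set.Finite.finite_subsets hfin).subset this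
  rw [← hun, finsum_mem_sUnion hdisj hDfin (fun t ht => domino_finite (hdom t ht))]
  exact finsum_mem_eq_zero_of_forall_eq_zero (fun d hd => domino_col_sum (hdom d hd))

/-- for `λ` with at most `2n` parts and empty 2-core,
`Σ_{i=1}^{2n} Σ_{j=1}^{2n} (−1)^{λ_i−λ_j+j−i}(λ_i−i) = 0`. -/
theorem full_alternating_sum_zero (n : ℕ) (hn : 0 < n) (μ : OneIdxPartition)
    (hlen : μ.part (2 * n + 1) = 0) (ht : HasDominoTiling μ.part) :
    ∑ i ∈ Finset.Icc 1 (2 * n), ∑ j ∈ Finset.Icc 1 (2 * n),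
        (-1 : ℤ) ^ (μ.part i + μ.part j + i + j) * ((μ.part i : ℤ) - (i : ℤ)) = 0 := by
  set f := μ.part with hf
  -- rows beyond 2n are empty
  have hrow : ∀ i, 2 * n + 1 ≤ i → f i = 0 := fun i hi =>
    Nat.le_antisymm (hlen ▸ μ.antitone (by omega) hi) (Nat.zero_le _)
  -- cells as a finset biUnion of rows
  classical
  set C : Finset (ℕ × ℕ) :=
    (Finset.Icc 1 (2 * n)).biUnion (fun i => (Finset.Icc 1 (f i)).image (fun j => (i, j))) with hC
  have hcells : cellsFn f = ↑C := by
    ext ⟨i, j⟩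
    simp only [cellsFn, Set.mem_setOf_eq, hC, Finset.coe_biUnion, Finset.mem_coe,
      Finset.mem_biUnion, Finset.mem_image, Finset.mem_Icc, Set.mem_iUnion]
    constructor
    · rintro ⟨h1, h2, h3⟩
      refine ⟨i, ⟨⟨h1, ?_⟩, j, ⟨⟨h2, h3⟩, rfl⟩⟩⟩
      by_contra h; push_neg at h
      have := hrow i (by omega); omega
    · rintro ⟨a, ⟨⟨ha1, _⟩, b, ⟨⟨hb1, hb2⟩, heq⟩⟩⟩
      obtain ⟨rfl, rfl⟩ := Prod.mk.injEq .. ▸ heq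
      exact ⟨ha1, hb1, hb2⟩
  have hfin : (cellsFn f).Finite := hcells ▸ C.finite_toSet
  have hzero : ∑ᶠ p ∈ cellsFn f, col p = 0 := cells_sum_zero ht hfin
  -- convert to row sums
  have hrows : ∑ i ∈ Finset.Icc 1 (2 * n), ∑ j ∈ Finset.Icc 1 (f i),
      (-1 : ℤ) ^ (i + j) = 0 := by
    rw [hcells, finsum_mem_coe_finset] at hzero
    rw [← hzero, hC, Finset.sum_biUnion]
    · refine Finset.sum_congr rfl fun i _ => ?_
      rw [Finset.sum_image (by intro a _ b _ h; simpa using h)]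
      rfl
    · intro a _ b _ hab
      simp only [Finset.disjoint_left, Finset.mem_image]
      rintro ⟨x, y⟩ ⟨u, _, hu⟩ ⟨v, _, hv⟩
      obtain ⟨rfl, rfl⟩ := Prod.mk.injEq .. ▸ hu
      obtain ⟨rfl, -⟩ := Prod.mk.injEq .. ▸ hv
      exact hab rfl
  -- key: alternating sum of (-1)^(f j + j) vanishes
  have hkey : ∑ j ∈ Finset.Icc 1 (2 * n), (-1 : ℤ) ^ (f j + j) = 0 := by
    have hterm : ∀ j, (-1 : ℤ) ^ (f j + j)
        = (-1) ^ j + 2 * ∑ k ∈ Finset.Icc 1 (f j), (-1 : ℤ) ^ (j + k) := by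
      intro j
      have : ∀ m : ℕ, ((-1 : ℤ)) ^ m = 1 + 2 * ∑ k ∈ Finset.Icc 1 m, (-1 : ℤ) ^ k := by
        intro m
        induction m with
        | zero => simp
        | succ m ih =>
          rw [Finset.sum_Icc_succ_top (by omega), pow_succ, ih]; ring
      have h2 : ∑ k ∈ Finset.Icc 1 (f j), (-1 : ℤ) ^ (j + k)
          = (-1) ^ j * ∑ k ∈ Finset.Icc 1 (f j), (-1 : ℤ) ^ k := by
        rw [Finset.mul_sum]
        exact Finset.sum_congr rfl fun k _ => pow_add _ _ _
      rw [h2, pow_add, this (f j)]; ring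
    calc ∑ j ∈ Finset.Icc 1 (2 * n), (-1 : ℤ) ^ (f j + j)
        = ∑ j ∈ Finset.Icc 1 (2 * n), ((-1 : ℤ) ^ j
            + 2 * ∑ k ∈ Finset.Icc 1 (f j), (-1 : ℤ) ^ (j + k)) :=
          Finset.sum_congr rfl fun j _ => hterm j
      _ = (∑ j ∈ Finset.Icc 1 (2 * n), (-1 : ℤ) ^ j)
            + 2 * ∑ j ∈ Finset.Icc 1 (2 * n), ∑ k ∈ Finset.Icc 1 (f j), (-1 : ℤ) ^ (j + k) := by
          rw [Finset.sum_add_distrib, Finset.mul_sum]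
      _ = 0 := by rw [hrows, mul_zero, add_zero, alt_sum]
  -- factor the double sum
  have hfac : ∀ i j : ℕ, (-1 : ℤ) ^ (f i + f j + i + j) * ((f i : ℤ) - i)
      = ((-1 : ℤ) ^ (f i + i) * ((f i : ℤ) - i)) * (-1 : ℤ) ^ (f j + j) := by
    intro i j
    have : f i + f j + i + j = (f i + i) + (f j + j) := by ring
    rw [this, pow_add]; ring
  calc ∑ i ∈ Finset.Icc 1 (2 * n), ∑ j ∈ Finset.Icc 1 (2 * n),
        (-1 : ℤ) ^ (f i + f j + i + j) * ((f i : ℤ) - i)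
      = ∑ i ∈ Finset.Icc 1 (2 * n), ((-1 : ℤ) ^ (f i + i) * ((f i : ℤ) - i))
          * ∑ j ∈ Finset.Icc 1 (2 * n), (-1 : ℤ) ^ (f j + j) := by
        refine Finset.sum_congr rfl fun i _ => ?_
        rw [Finset.mul_sum]
        exact Finset.sum_congr rfl fun j _ => hfac i j
    _ = 0 := by rw [hkey]; simp
end

section
/- For every real number x with |x| < 1, the limit as q tends to 1 from below (q real, 0 < q < 1) of (q x^2; q^2)_∞/(x^2; q^2)_∞ equals (1 − x^2)^{−1/2}, where the positive square root is taken. -/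
open Real Filter

/-- `(a;q)_∞ = ∏_{k≥0} (1 − a q^k)`, as an infinite product of real numbers. -/
noncomputable def qPochInf (a q : ℝ) : ℝ := ∏' k : ℕ, (1 - a * q ^ k)

private lemma factor_pos {c r : ℝ} (hc0 : 0 ≤ c) (hc1 : c < 1) (hr0 : 0 ≤ r) (hr1 : r ≤ 1)
    (k : ℕ) : 0 < 1 - c * r ^ k := by
  have h1 : r ^ k ≤ 1 := pow_le_one₀ hr0 hr1
  nlinarith [pow_nonneg hr0 k]

private lemma log_summable {c r : ℝ} (hc0 : 0 ≤ c) (hc1 : c < 1) (hr0 : 0 ≤ r) (hr1 : r < 1) :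
    Summable (fun k : ℕ => Real.log (1 - c * r ^ k)) := by
  have hgeom : Summable (fun k : ℕ => c * (1 - c)⁻¹ * r ^ k) :=
    (summable_geometric_of_lt_one hr0 hr1).mul_left _
  have h : Summable (fun k : ℕ => -Real.log (1 - c * r ^ k)) := by
    apply Summable.of_nonneg_of_le _ _ hgeom
    · intro k
      have hpos := factor_pos hc0 hc1 hr0 hr1.le k
      have hle : (1 : ℝ) - c * r ^ k ≤ 1 := by
        nlinarith [pow_nonneg hr0 k]
      have := Real.log_nonpos (le_of_lt hpos) hle
      linarith
    · intro k
      have hrk0 : 0 ≤ r ^ k := pow_nonneg hr0 k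
      have hrk1 : r ^ k ≤ 1 := pow_le_one₀ hr0 hr1.le
      have hy0 : 0 ≤ c * r ^ k := mul_nonneg hc0 hrk0
      have hyc : c * r ^ k ≤ c := by nlinarith
      have h1y : 0 < 1 - c * r ^ k := factor_pos hc0 hc1 hr0 hr1.le k
      have h1c : 0 < 1 - c := by linarith
      have hlog : -Real.log (1 - c * r ^ k) ≤ (1 - c * r ^ k)⁻¹ - 1 := by
        have := Real.log_le_sub_one_of_pos (inv_pos.mpr h1y)
        rwa [Real.log_inv] at this
      have heq : (1 - c * r ^ k)⁻¹ - 1 = (c * r ^ k) * (1 - c * r ^ k)⁻¹ := by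
        field_simp
        ring
      have hinv : (1 - c * r ^ k)⁻¹ ≤ (1 - c)⁻¹ := by
        apply inv_anti₀ h1c
        linarith
      calc -Real.log (1 - c * r ^ k) ≤ (c * r ^ k) * (1 - c * r ^ k)⁻¹ := by
            rw [← heq]; exact hlog
        _ ≤ (c * r ^ k) * (1 - c)⁻¹ := by
            exact mul_le_mul_of_nonneg_left hinv hy0
        _ = c * (1 - c)⁻¹ * r ^ k := by ring
  have := h.neg
  simpa using this

private lemma qPoch_eq_exp {c r : ℝ} (hc0 : 0 ≤ c) (hc1 : c < 1) (hr0 : 0 ≤ r) (hr1 : r < 1) :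
    (∏' k : ℕ, (1 - c * r ^ k)) = Real.exp (∑' k : ℕ, Real.log (1 - c * r ^ k)) := by
  have h := Real.rexp_tsum_eq_tprod (f := fun k => 1 - c * r ^ k)
    (fun k => factor_pos hc0 hc1 hr0 hr1.le k) (log_summable hc0 hc1 hr0 hr1)
  exact h.symm

private lemma log_tsum_split {c r : ℝ} (hc0 : 0 ≤ c) (hc1 : c < 1) (hr0 : 0 ≤ r) (hr1 : r < 1) :
    (∑' k : ℕ, Real.log (1 - c * r ^ k))
      = Real.log (1 - c) + ∑' k : ℕ, Real.log (1 - (c * r) * r ^ k) := by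
  rw [Summable.tsum_eq_zero_add (log_summable hc0 hc1 hr0 hr1)]
  simp only [pow_zero, mul_one]
  congr 1
  apply tsum_congr
  intro k
  congr 2
  ring

/-- Core two-sided estimate for the ratio, for `t < q < 1`. -/
private lemma core {t q : ℝ} (ht0 : 0 ≤ t) (ht1 : t < 1) (hq0 : 0 < q) (hq1 : q < 1)
    (htq : t < q) :
    Real.exp (-(1 / 2) * Real.log (1 - t)) ≤ qPochInf (q * t) (q ^ 2) / qPochInf t (q ^ 2)
      ∧ qPochInf (q * t) (q ^ 2) / qPochInf t (q ^ 2)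
          ≤ Real.exp (-(1 / 2) * Real.log (1 - t / q)) := by
  have hq : q ≠ 0 := ne_of_gt hq0
  have hr0 : (0 : ℝ) ≤ q ^ 2 := sq_nonneg q
  have hr1 : q ^ 2 < 1 := by nlinarith
  -- the various coefficients
  have hqt0 : 0 ≤ q * t := mul_nonneg hq0.le ht0
  have hqt1 : q * t < 1 := by nlinarith
  have htr0 : 0 ≤ t * q ^ 2 := mul_nonneg ht0 hr0
  have htr1 : t * q ^ 2 < 1 := by nlinarith
  have hs0 : 0 ≤ t / q := div_nonneg ht0 hq0.le
  have hs1 : t / q < 1 := (div_lt_one hq0).mpr htq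
  -- summability
  have Sa := log_summable hqt0 hqt1 hr0 hr1
  have Sb := log_summable ht0 ht1 hr0 hr1
  have Sc := log_summable htr0 htr1 hr0 hr1
  have Sd := log_summable hs0 hs1 hr0 hr1
  -- products as exponentials
  have hA : qPochInf (q * t) (q ^ 2)
      = Real.exp (∑' k : ℕ, Real.log (1 - (q * t) * (q ^ 2) ^ k)) :=
    qPoch_eq_exp hqt0 hqt1 hr0 hr1
  have hB : qPochInf t (q ^ 2)
      = Real.exp (∑' k : ℕ, Real.log (1 - t * (q ^ 2) ^ k)) :=
    qPoch_eq_exp ht0 ht1 hr0 hr1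
  set A := ∑' k : ℕ, Real.log (1 - (q * t) * (q ^ 2) ^ k) with hAdef
  set B := ∑' k : ℕ, Real.log (1 - t * (q ^ 2) ^ k) with hBdef
  set C := ∑' k : ℕ, Real.log (1 - (t * q ^ 2) * (q ^ 2) ^ k) with hCdef
  set D := ∑' k : ℕ, Real.log (1 - (t / q) * (q ^ 2) ^ k) with hDdef
  have hratio : qPochInf (q * t) (q ^ 2) / qPochInf t (q ^ 2) = Real.exp (A - B) := by
    rw [hA, hB, Real.exp_sub]
  -- split identities
  have hsplitB : B = Real.log (1 - t) + C := log_tsum_split ht0 ht1 hr0 hr1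
  have hsplitD : D = Real.log (1 - t / q) + A := by
    have h := log_tsum_split hs0 hs1 hr0 hr1
    rw [hDdef, h, hAdef]
    congr 1
    apply tsum_congr
    intro k
    congr 2
    field_simp
  -- lower estimate : B + C ≤ 2 * A
  have hlow : B + C ≤ 2 * A := by
    have hsum : B + C = ∑' k : ℕ,
        (Real.log (1 - t * (q ^ 2) ^ k) + Real.log (1 - (t * q ^ 2) * (q ^ 2) ^ k)) := by
      rw [hBdef, hCdef, Summable.tsum_add Sb Sc]
    have hsum2 : 2 * A = ∑' k : ℕ, (2 * Real.log (1 - (q * t) * (q ^ 2) ^ k)) := by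
      rw [hAdef, tsum_mul_left]
    rw [hsum, hsum2]
    apply Summable.tsum_le_tsum _ (Sb.add Sc) (Sa.mul_left 2)
    intro k
    have hu0 : 0 ≤ (q ^ 2 : ℝ) ^ k := pow_nonneg hr0 k
    have p1 := factor_pos ht0 ht1 hr0 hr1.le k
    have p2 := factor_pos htr0 htr1 hr0 hr1.le k
    have p3 := factor_pos hqt0 hqt1 hr0 hr1.le k
    have halg : (1 - t * (q ^ 2) ^ k) * (1 - (t * q ^ 2) * (q ^ 2) ^ k)
        ≤ (1 - (q * t) * (q ^ 2) ^ k) ^ 2 := by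
      nlinarith [mul_nonneg (mul_nonneg ht0 hu0) (sq_nonneg (1 - q))]
    calc Real.log (1 - t * (q ^ 2) ^ k) + Real.log (1 - (t * q ^ 2) * (q ^ 2) ^ k)
        = Real.log ((1 - t * (q ^ 2) ^ k) * (1 - (t * q ^ 2) * (q ^ 2) ^ k)) := by
          rw [Real.log_mul p1.ne' p2.ne']
      _ ≤ Real.log ((1 - (q * t) * (q ^ 2) ^ k) ^ 2) :=
          Real.log_le_log (mul_pos p1 p2) halg
      _ = 2 * Real.log (1 - (q * t) * (q ^ 2) ^ k) := by
          rw [Real.log_pow]; push_cast; ring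
  -- upper estimate : A + D ≤ 2 * B
  have hupp : A + D ≤ 2 * B := by
    have hsum : A + D = ∑' k : ℕ,
        (Real.log (1 - (q * t) * (q ^ 2) ^ k) + Real.log (1 - (t / q) * (q ^ 2) ^ k)) := by
      rw [hAdef, hDdef, Summable.tsum_add Sa Sd]
    have hsum2 : 2 * B = ∑' k : ℕ, (2 * Real.log (1 - t * (q ^ 2) ^ k)) := by
      rw [hBdef, tsum_mul_left]
    rw [hsum, hsum2]
    apply Summable.tsum_le_tsum _ (Sa.add Sd) (Sb.mul_left 2)
    intro k
    have hu0 : 0 ≤ (q ^ 2 : ℝ) ^ k := pow_nonneg hr0 k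
    have p1 := factor_pos hqt0 hqt1 hr0 hr1.le k
    have p2 := factor_pos hs0 hs1 hr0 hr1.le k
    have p3 := factor_pos ht0 ht1 hr0 hr1.le k
    have halg : (1 - (q * t) * (q ^ 2) ^ k) * (1 - (t / q) * (q ^ 2) ^ k)
        ≤ (1 - t * (q ^ 2) ^ k) ^ 2 := by
      rw [← mul_le_mul_iff_right₀ hq0]
      have hexp : q * ((1 - (q * t) * (q ^ 2) ^ k) * (1 - (t / q) * (q ^ 2) ^ k))
          = (1 - (q * t) * (q ^ 2) ^ k) * (q - t * (q ^ 2) ^ k) := by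
        field_simp
      rw [hexp]
      nlinarith [mul_nonneg (mul_nonneg ht0 hu0) (sq_nonneg (q - 1))]
    calc Real.log (1 - (q * t) * (q ^ 2) ^ k) + Real.log (1 - (t / q) * (q ^ 2) ^ k)
        = Real.log ((1 - (q * t) * (q ^ 2) ^ k) * (1 - (t / q) * (q ^ 2) ^ k)) := by
          rw [Real.log_mul p1.ne' p2.ne']
      _ ≤ Real.log ((1 - t * (q ^ 2) ^ k) ^ 2) :=
          Real.log_le_log (mul_pos p1 p2) halg
      _ = 2 * Real.log (1 - t * (q ^ 2) ^ k) := by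
          rw [Real.log_pow]; push_cast; ring
  constructor
  · rw [hratio]
    apply Real.exp_le_exp.mpr
    have : Real.log (1 - t) + C ≤ B := by rw [hsplitB]
    linarith [hlow, hsplitB.ge, hsplitB.le]
  · rw [hratio]
    apply Real.exp_le_exp.mpr
    linarith [hupp, hsplitD.le]

/-- for real `x` with `|x| < 1`, as `q → 1⁻` (with `0 < q < 1`),
`(q x²; q²)_∞ / (x²; q²)_∞ → (1 − x²)^{−1/2}` (positive square root). -/
theorem tendsto_qPoch_ratio (x : ℝ) (hx : |x| < 1) :
    Filter.Tendsto
      (fun q : ℝ => qPochInf (q * x ^ 2) (q ^ 2) / qPochInf (x ^ 2) (q ^ 2))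
      (nhdsWithin 1 (Set.Ioo (0 : ℝ) 1))
      (nhds ((1 - x ^ 2) ^ (-(1 / 2) : ℝ))) := by
  set t := x ^ 2 with ht
  have ht0 : 0 ≤ t := sq_nonneg x
  have ht1 : t < 1 := by
    have h1 : x ^ 2 = |x| ^ 2 := (sq_abs x).symm
    have h2 : |x| ^ 2 < 1 := by nlinarith [abs_nonneg x]
    rw [ht, h1]; exact h2
  have h1t : (0 : ℝ) < 1 - t := by linarith
  have htarget : (1 - x ^ 2) ^ (-(1 / 2) : ℝ)
      = Real.exp (-(1 / 2) * Real.log (1 - t)) := by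
    rw [← ht, Real.rpow_def_of_pos h1t]
    ring_nf
  rw [htarget]
  -- the upper bounding function tends to the target
  have hupper_tendsto : Tendsto (fun q : ℝ => Real.exp (-(1 / 2) * Real.log (1 - t / q)))
      (nhdsWithin 1 (Set.Ioo (0 : ℝ) 1)) (nhds (Real.exp (-(1 / 2) * Real.log (1 - t)))) := by
    have h1 : ContinuousAt (fun q : ℝ => 1 - t / q) 1 := by
      apply ContinuousAt.sub continuousAt_const
      exact ContinuousAt.div continuousAt_const continuousAt_id one_ne_zero
    have hval : (fun q : ℝ => 1 - t / q) 1 = 1 - t := by simp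
    have h2 : ContinuousAt (fun q : ℝ => Real.log (1 - t / q)) 1 :=
      h1.log (by simpa using h1t.ne')
    have h3 : ContinuousAt (fun q : ℝ => Real.exp (-(1 / 2) * Real.log (1 - t / q))) 1 :=
      (Real.continuous_exp.continuousAt).comp (continuousAt_const.mul h2)
    have h4 := h3.tendsto.mono_left (nhdsWithin_le_nhds (s := Set.Ioo (0:ℝ) 1))
    simpa using h4
  apply tendsto_of_tendsto_of_tendsto_of_le_of_le' tendsto_const_nhds hupper_tendsto
  · -- lower bound eventually
    have hev1 : ∀ᶠ q in nhdsWithin (1 : ℝ) (Set.Ioo 0 1), t < q :=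
      (eventually_gt_nhds ht1).filter_mono nhdsWithin_le_nhds
    filter_upwards [hev1, self_mem_nhdsWithin] with q hq hqmem
    exact (core ht0 ht1 hqmem.1 hqmem.2 hq).1
  · -- upper bound eventually
    have hev1 : ∀ᶠ q in nhdsWithin (1 : ℝ) (Set.Ioo 0 1), t < q :=
      (eventually_gt_nhds ht1).filter_mono nhdsWithin_le_nhds
    filter_upwards [hev1, self_mem_nhdsWithin] with q hq hqmem
    exact (core ht0 ht1 hqmem.1 hqmem.2 hq).2
end

section
/- Let F be a field, let n be a positive integer, and let b, c, x_1, …, x_n, y_1, …, y_n be elements of F with x_i + y_j ≠ 0 for all 1 ≤ i, j ≤ n. Then det_{1≤i,j≤n} ((b x_i + c y_j)/(x_i + y_j)) = (b − c)^{n−1} · (b ∏_{i=1}^n x_i + (−1)^{n−1} c ∏_{i=1}^n y_i) · ∏_{1≤i<j≤n} (x_i − x_j)(y_i − y_j) / ∏_{i,j=1}^n (x_i + y_j). -/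
open Matrix Finset

section Auxiliary

variable {F : Type*} [Field F]

/-- Cauchy's double alternant, denominator-cleared form. -/
lemma cauchy_det_aux : ∀ (n : ℕ) (x y : Fin n → F), (∀ i j, x i + y j ≠ 0) →
    Matrix.det (Matrix.of fun i j => 1 / (x i + y j)) * (∏ i, ∏ j, (x i + y j)) =
      ∏ i, ∏ j, if i < j then (x i - x j) * (y i - y j) else 1 := by
  intro n
  induction n with
  | zero => intro x y h; simp
  | succ n ih =>
    intro x y h
    set L : Fin (n+1) := Fin.last n with hL
    have hcs : ∀ i : Fin n, i.castSucc ≠ L := fun i => (Fin.castSucc_lt_last i).ne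
    -- Step 1: subtract last row from the others
    have h1 : Matrix.det (Matrix.of fun i j : Fin (n+1) => 1 / (x i + y j)) =
        Matrix.det (Matrix.of fun i j : Fin (n+1) =>
          if i = L then 1 / (x L + y j) else 1 / (x i + y j) - 1 / (x L + y j)) := by
      apply Matrix.det_eq_of_forall_row_eq_smul_add_const
        (c := fun i => if i = L then 0 else 1) L (by simp)
      intro i j
      by_cases hi : i = L <;> simp [hi]
    -- Step 2: factor rows and columns
    have e2 : (Matrix.of fun i j : Fin (n+1) =>
          if i = L then 1 / (x L + y j) else 1 / (x i + y j) - 1 / (x L + y j)) =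
        Matrix.of fun i j : Fin (n+1) => (if i = L then 1 else x L - x i) *
          ((1 / (x L + y j)) *
            (Matrix.of fun i j : Fin (n+1) => if i = L then (1:F) else 1 / (x i + y j)) i j) := by
      ext i j
      by_cases hi : i = L
      · simp [hi]
      · have hx := h i j; have hX := h L j
        simp only [Matrix.of_apply, if_neg hi]
        rw [div_sub_div _ _ hx hX]
        simp only [mul_one_div, div_div]
        rw [div_eq_div_iff (mul_ne_zero hx hX) (mul_ne_zero hX hx)]
        ring
    have h2 : Matrix.det (Matrix.of fun i j : Fin (n+1) => (if i = L then 1 else x L - x i) *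
          ((1 / (x L + y j)) *
            (Matrix.of fun i j : Fin (n+1) => if i = L then (1:F) else 1 / (x i + y j)) i j)) =
        (∏ i, (if i = L then 1 else x L - x i)) * ((∏ j, 1 / (x L + y j)) *
          Matrix.det (Matrix.of fun i j : Fin (n+1) =>
            if i = L then (1:F) else 1 / (x i + y j))) := by
      refine (Matrix.det_mul_column _ _).trans ?_
      exact congrArg _ (Matrix.det_mul_row _ _)
    -- Step 3: subtract last column from the others
    have h3 : Matrix.det (Matrix.of fun i j : Fin (n+1) =>
          if i = L then (1:F) else 1 / (x i + y j)) =
        Matrix.det (Matrix.of fun i j : Fin (n+1) =>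
          if j = L then (if i = L then (1:F) else 1 / (x i + y L))
          else (if i = L then 0 else 1 / (x i + y j) - 1 / (x i + y L))) := by
      rw [← Matrix.det_transpose, ← Matrix.det_transpose (Matrix.of fun i j =>
        if j = L then (if i = L then (1:F) else 1 / (x i + y L))
        else (if i = L then 0 else 1 / (x i + y j) - 1 / (x i + y L)))]
      apply Matrix.det_eq_of_forall_row_eq_smul_add_const
        (c := fun j => if j = L then 0 else 1) L (by simp)
      intro j i
      simp only [Matrix.transpose_apply, Matrix.of_apply]
      by_cases hj : j = L
      · simp [hj]
      · by_cases hi : i = L <;> simp [hi, hj] <;> ring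
    -- Step 4: factor rows and columns again
    have e4 : (Matrix.of fun i j : Fin (n+1) =>
          if j = L then (if i = L then (1:F) else 1 / (x i + y L))
          else (if i = L then 0 else 1 / (x i + y j) - 1 / (x i + y L))) =
        Matrix.of fun i j : Fin (n+1) => (if i = L then 1 else 1 / (x i + y L)) *
          ((if j = L then 1 else y L - y j) *
            (Matrix.of fun i j : Fin (n+1) =>
              if j = L then (1:F) else if i = L then 0 else 1 / (x i + y j)) i j) := by
      ext i j
      by_cases hj : j = L
      · by_cases hi : i = L <;> simp [hi, hj]
      · by_cases hi : i = L
        · simp [hi, hj]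
        · have hx := h i j; have hX := h i L
          simp only [Matrix.of_apply, if_neg hi, if_neg hj]
          rw [div_sub_div _ _ hx hX]
          simp only [mul_one_div, div_div, one_div_mul_eq_div, div_div]
          rw [div_eq_div_iff (mul_ne_zero hx hX) (mul_ne_zero hx hX)]
          ring
    have h4 : Matrix.det (Matrix.of fun i j : Fin (n+1) =>
          (if i = L then 1 else 1 / (x i + y L)) *
          ((if j = L then 1 else y L - y j) *
            (Matrix.of fun i j : Fin (n+1) =>
              if j = L then (1:F) else if i = L then 0 else 1 / (x i + y j)) i j)) =
        (∏ i, (if i = L then 1 else 1 / (x i + y L))) *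
          ((∏ j, (if j = L then 1 else y L - y j)) *
            Matrix.det (Matrix.of fun i j : Fin (n+1) =>
              if j = L then (1:F) else if i = L then 0 else 1 / (x i + y j))) := by
      refine (Matrix.det_mul_column _ _).trans ?_
      exact congrArg _ (Matrix.det_mul_row _ _)
    -- Step 5: expand along the last row
    have h5 : Matrix.det (Matrix.of fun i j : Fin (n+1) =>
          if j = L then (1:F) else if i = L then 0 else 1 / (x i + y j)) =
        Matrix.det (Matrix.of fun i j : Fin n => 1 / (x i.castSucc + y j.castSucc)) := by
      rw [Matrix.det_succ_row _ L]
      rw [Finset.sum_eq_single L]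
      · have hAB : ((Matrix.of fun i j : Fin (n+1) =>
            if j = L then (1:F) else if i = L then 0 else 1 / (x i + y j)).submatrix
              L.succAbove L.succAbove) =
            Matrix.of fun i j : Fin n => 1 / (x i.castSucc + y j.castSucc) := by
          ext i j
          simp [hL, Fin.succAbove_last, Matrix.submatrix_apply, hcs j, hcs i]
        rw [hAB]
        simp [Even.neg_one_pow (by exact ⟨(L:ℕ), rfl⟩ : Even ((L:ℕ) + (L:ℕ)))]
      · intro j _ hj
        simp [hj]
      · simp
    -- induction hypothesis
    have h' : ∀ (i j : Fin n), x i.castSucc + y j.castSucc ≠ 0 := fun i j => h _ _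
    have ihn : Matrix.det (Matrix.of fun i j : Fin n => 1 / (x i.castSucc + y j.castSucc)) *
        (∏ i : Fin n, ∏ j : Fin n, (x i.castSucc + y j.castSucc)) =
        ∏ i : Fin n, ∏ j : Fin n, if i < j then
          (x i.castSucc - x j.castSucc) * (y i.castSucc - y j.castSucc) else 1 :=
      ih (fun i => x i.castSucc) (fun j => y j.castSucc) h'
    -- product bookkeeping
    have hr1 : (∏ i : Fin (n+1), if i = L then (1:F) else x L - x i) =
        ∏ i : Fin n, (x L - x i.castSucc) := by
      rw [Fin.prod_univ_castSucc]
      simp [hcs, hL]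
    have hr2 : (∏ i : Fin (n+1), if i = L then (1:F) else 1 / (x i + y L)) =
        ∏ i : Fin n, 1 / (x i.castSucc + y L) := by
      rw [Fin.prod_univ_castSucc]
      simp [hcs, hL]
    have hs2 : (∏ j : Fin (n+1), if j = L then (1:F) else y L - y j) =
        ∏ j : Fin n, (y L - y j.castSucc) := by
      rw [Fin.prod_univ_castSucc]
      simp [hcs, hL]
    have hP : (∏ i : Fin (n+1), ∏ j : Fin (n+1), (x i + y j)) =
        ((∏ i : Fin n, ∏ j : Fin n, (x i.castSucc + y j.castSucc)) *
          (∏ i : Fin n, (x i.castSucc + y L))) * (∏ j : Fin (n+1), (x L + y j)) := by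
      rw [Fin.prod_univ_castSucc (f := fun i => ∏ j, (x i + y j)), ← hL,
        ← Finset.prod_mul_distrib]
      congr 1
      apply Finset.prod_congr rfl
      intro i _
      rw [Fin.prod_univ_castSucc (f := fun j => x i.castSucc + y j), ← hL]
    have hN : (∏ i : Fin (n+1), ∏ j : Fin (n+1),
          if i < j then (x i - x j) * (y i - y j) else 1) =
        (∏ i : Fin n, ∏ j : Fin n, if i < j then
            (x i.castSucc - x j.castSucc) * (y i.castSucc - y j.castSucc) else 1) *
          (∏ i : Fin n, ((x i.castSucc - x L) * (y i.castSucc - y L))) := by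
      rw [Fin.prod_univ_castSucc
        (f := fun i => ∏ j, if i < j then (x i - x j) * (y i - y j) else 1), ← hL]
      have hlast : (∏ j : Fin (n+1),
          if L < j then (x L - x j) * (y L - y j) else 1) = 1 :=
        Finset.prod_eq_one fun j _ => if_neg (not_lt.mpr (hL ▸ Fin.le_last j))
      rw [hlast, mul_one, ← Finset.prod_mul_distrib]
      apply Finset.prod_congr rfl
      intro i _
      rw [Fin.prod_univ_castSucc
        (f := fun j => if i.castSucc < j then (x i.castSucc - x j) * (y i.castSucc - y j) else 1),
        ← hL]
      rw [if_pos (hL ▸ Fin.castSucc_lt_last i)]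
      congr 1

    -- cancellations
    have c1 : (∏ j : Fin (n+1), 1 / (x L + y j)) * (∏ j : Fin (n+1), (x L + y j)) = 1 := by
      rw [← Finset.prod_mul_distrib]
      exact Finset.prod_eq_one fun j _ => one_div_mul_cancel (h L j)
    have c2 : (∏ i : Fin n, 1 / (x i.castSucc + y L)) *
        (∏ i : Fin n, (x i.castSucc + y L)) = 1 := by
      rw [← Finset.prod_mul_distrib]
      exact Finset.prod_eq_one fun i _ => one_div_mul_cancel (h i.castSucc L)
    have hT : (∏ i : Fin n, (x L - x i.castSucc)) * (∏ j : Fin n, (y L - y j.castSucc)) =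
        ∏ i : Fin n, ((x i.castSucc - x L) * (y i.castSucc - y L)) := by
      rw [← Finset.prod_mul_distrib]
      exact Finset.prod_congr rfl fun i _ => by ring
    rw [h1, e2, h2, h3, e4, h4, h5, hr1, hr2, hs2, hP, hN]
    calc (∏ i : Fin n, (x L - x i.castSucc)) *
          ((∏ j : Fin (n+1), 1 / (x L + y j)) *
            ((∏ i : Fin n, 1 / (x i.castSucc + y L)) *
              ((∏ j : Fin n, (y L - y j.castSucc)) *
                Matrix.det (Matrix.of fun i j : Fin n => 1 / (x i.castSucc + y j.castSucc))))) *
          (((∏ i : Fin n, ∏ j : Fin n, (x i.castSucc + y j.castSucc)) *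
            (∏ i : Fin n, (x i.castSucc + y L))) * (∏ j : Fin (n+1), (x L + y j)))
        = ((∏ i : Fin n, (x L - x i.castSucc)) * (∏ j : Fin n, (y L - y j.castSucc))) *
            (Matrix.det (Matrix.of fun i j : Fin n => 1 / (x i.castSucc + y j.castSucc)) *
              (∏ i : Fin n, ∏ j : Fin n, (x i.castSucc + y j.castSucc))) *
            (((∏ j : Fin (n+1), 1 / (x L + y j)) * (∏ j : Fin (n+1), (x L + y j))) *
              ((∏ i : Fin n, 1 / (x i.castSucc + y L)) * (∏ i : Fin n, (x i.castSucc + y L)))) := by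
          ring
      _ = _ := by
          rw [c1, c2, ihn, hT, mul_one, mul_one, mul_comm]

/-- The determinant of `N + t · (all-ones)` is an affine function of `t`. -/
lemma det_add_const_affine {n : ℕ} (N : Matrix (Fin (n+1)) (Fin (n+1)) F) :
    ∃ s : F, ∀ t : F, Matrix.det (Matrix.of fun i j => N i j + t) = N.det + t * s := by
  classical
  set B : Matrix (Fin (n+1)) (Fin (n+1)) F :=
    Matrix.of fun i j => if i = 0 then 0 else N i j - N 0 j with hB
  refine ⟨(B.updateRow 0 (fun _ => 1)).det, fun t => ?_⟩
  have key : ∀ u : F, Matrix.det (Matrix.of fun i j => N i j + u) =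
      (B.updateRow 0 (fun j => N 0 j + u)).det := by
    intro u
    apply Matrix.det_eq_of_forall_row_eq_smul_add_const
      (c := fun i => if i = 0 then 0 else 1) 0 (by simp)
    intro i j
    by_cases hi : i = 0 <;> simp [hi, hB, Matrix.updateRow_apply] <;> ring
  have h2 : ∀ u : F, (B.updateRow 0 (fun j => N 0 j + u)).det =
      (B.updateRow 0 (fun j => N 0 j)).det + u * (B.updateRow 0 (fun _ => 1)).det := by
    intro u
    have e : (fun j => N 0 j + u) = (fun j => N 0 j) + (u • fun _ => (1:F)) := by
      funext j; simp
    rw [e, Matrix.det_updateRow_add, Matrix.det_updateRow_smul]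
  have h0 : N.det = (B.updateRow 0 (fun j => N 0 j)).det := by
    have k0 := key 0
    have e : (Matrix.of fun i j => N i j + (0:F)) = N := by ext i j; simp
    rw [e] at k0
    rw [k0, h2 0, zero_mul, add_zero]
  rw [key t, h2 t, ← h0]

end Auxiliary

/-- a generalisation of Cauchy's double alternant:
`det((b x_i + c y_j)/(x_i + y_j))
  = (b−c)^{n−1} (b ∏ x_i + (−1)^{n−1} c ∏ y_i) ∏_{i<j}(x_i−x_j)(y_i−y_j) / ∏_{i,j}(x_i+y_j)`. -/
theorem cauchy_double_alternant_generalisation (F : Type*) [Field F] (n : ℕ) (hn : 0 < n)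
    (b c : F) (x y : Fin n → F) (h : ∀ i j : Fin n, x i + y j ≠ 0) :
    Matrix.det (Matrix.of fun i j : Fin n => (b * x i + c * y j) / (x i + y j)) =
      (b - c) ^ (n - 1) *
        (b * ∏ i : Fin n, x i + (-1 : F) ^ (n - 1) * c * ∏ i : Fin n, y i) *
        (∏ i : Fin n, ∏ j : Fin n, if i < j then (x i - x j) * (y i - y j) else 1) /
        ∏ i : Fin n, ∏ j : Fin n, (x i + y j) := by
  obtain ⟨m, rfl⟩ : ∃ m, n = m + 1 := ⟨n - 1, (Nat.succ_pred_eq_of_pos hn).symm⟩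
  simp only [Nat.add_sub_cancel]
  have hD : (∏ i : Fin (m+1), ∏ j : Fin (m+1), (x i + y j)) ≠ 0 := by
    rw [Finset.prod_ne_zero_iff]
    intro i _
    rw [Finset.prod_ne_zero_iff]
    exact fun j _ => h i j
  by_cases hbc : b = c
  · subst hbc
    have hMconst : (Matrix.of fun i j : Fin (m+1) => (b * x i + b * y j) / (x i + y j)) =
        Matrix.of fun _ _ : Fin (m+1) => b := by
      ext i j
      simp only [Matrix.of_apply]
      rw [div_eq_iff (h i j)]
      ring
    rw [hMconst]
    match m with
    | 0 =>
      rw [Matrix.det_fin_one]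
      have e1 : (∏ i : Fin 1, ∏ j : Fin 1, if i < j then (x i - x j) * (y i - y j) else 1)
          = 1 := by simp
      have e2 : (∏ i : Fin 1, ∏ j : Fin 1, (x i + y j)) = x 0 + y 0 := by simp
      rw [e1, e2, mul_one, pow_zero, one_mul, pow_zero, one_mul, Fin.prod_univ_one,
        Fin.prod_univ_one, eq_div_iff (h 0 0)]
      simp only [Matrix.of_apply]
      ring
    | m + 1 =>
      have hdet : Matrix.det (Matrix.of fun _ _ : Fin (m+2) => b) = 0 :=
        Matrix.det_zero_of_row_eq (show (0 : Fin (m+2)) ≠ 1 by simp) rfl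
      rw [hdet, sub_self, zero_pow (Nat.succ_ne_zero m), zero_mul, zero_mul, zero_div]
  · -- main case b ≠ c
    have hbc' : b - c ≠ 0 := sub_ne_zero.mpr hbc
    set C : Matrix (Fin (m+1)) (Fin (m+1)) F := Matrix.of fun i j => 1 / (x i + y j) with hC
    set X : Matrix (Fin (m+1)) (Fin (m+1)) F :=
      Matrix.of fun i j => x i * (1 / (x i + y j)) with hX
    obtain ⟨s, hs⟩ := det_add_const_affine X
    have detX : X.det = (∏ i, x i) * C.det := Matrix.det_mul_column x C
    have detY : Matrix.det (Matrix.of fun i j : Fin (m+1) => y j * (1 / (x i + y j))) =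
        (∏ j, y j) * C.det := Matrix.det_mul_row y C
    -- relate the t = -1 value to Y
    have eY : (Matrix.of fun i j : Fin (m+1) => X i j + (-1 : F)) =
        - Matrix.of fun i j : Fin (m+1) => y j * (1 / (x i + y j)) := by
      ext i j
      have hxy := h i j
      simp only [Matrix.of_apply, hX, Matrix.neg_apply, mul_one_div]
      rw [div_add' _ _ _ hxy, ← neg_div]
      congr 1
      ring
    have hsneg := hs (-1)
    rw [eY, Matrix.det_neg, detY] at hsneg
    -- decompose M
    have hM : (Matrix.of fun i j : Fin (m+1) => (b * x i + c * y j) / (x i + y j)) =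
        (b - c) • Matrix.of fun i j : Fin (m+1) => X i j + c / (b - c) := by
      ext i j
      have hxy := h i j
      simp only [Matrix.of_apply, hX, Matrix.smul_apply, smul_eq_mul, mul_one_div]
      rw [div_eq_iff hxy]
      field_simp
      ring
    rw [hM, Matrix.det_smul, hs (c / (b - c)), detX]
    rw [eq_div_iff hD]
    have hCau := cauchy_det_aux (m+1) x y h
    rw [← hC] at hCau
    simp only [Fintype.card_fin, Finset.card_univ] at hsneg ⊢
    -- now pure algebra
    have hsol : s = (∏ i, x i) * C.det - (-1)^(m+1) * ((∏ j, y j) * C.det) := by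
      linear_combination hsneg + detX
    have key : (b - c) * ((∏ i, x i) * C.det + c / (b - c) * s) =
        b * ((∏ i, x i) * C.det) + (-1)^m * c * ((∏ j, y j) * C.det) := by
      rw [hsol]
      field_simp
      ring
    linear_combination ((∏ i : Fin (m+1), ∏ j : Fin (m+1), (x i + y j)) * (b - c) ^ m) * key +
      ((b - c) ^ m * (b * (∏ i, x i) + (-1)^m * c * (∏ j, y j))) * hCau
end
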